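/- For the stochastic tandem queueing system with infinite buffers, suppose the sequences {τ_{i,n} : n = 1, 2, …}, i = 0, 1, …, M, are mutually independent sequences of independent and identically distributed nonnegative random variables with 0 ≤ E[τ_{i,1}] < ∞ and Var[τ_{i,1}] < ∞, and suppose at least one of the expectations E[τ_{i,1}], i = 0, 1, …, M, is positive. Then with probability one, lim_{n→∞} n/D_M(n) = (max_{0 ≤ i ≤ M} E[τ_{i,1}])^{−1}. -/

import Mathlib

open MeasureTheory ProbabilityTheory Finset Filter

/-- Departure epochs of the tandem queueing system with infinite buffers. -/
noncomputable def depart (τ : ℕ → ℕ → ℝ) : ℕ → ℕ → ℝ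
  | 0, 0 => 0
  | 0, n + 1 => depart τ 0 n + τ 0 (n + 1)
  | _ + 1, 0 => 0
  | m + 1, n + 1 =>
      max (depart τ m (n + 1)) (depart τ (m + 1) n) + τ (m + 1) (n + 1)
  termination_by m n => (m, n)

lemma depart_zero (τ : ℕ → ℕ → ℝ) (m : ℕ) : depart τ m 0 = 0 := by
  cases m <;> rw [depart]

lemma depart_row_zero (τ : ℕ → ℕ → ℝ) (n : ℕ) :
    depart τ 0 n = ∑ k ∈ range n, τ 0 (k + 1) := by
  induction n with
  | zero => simp [depart_zero]
  | succ n ih => rw [depart, ih, Finset.sum_range_succ]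

lemma depart_congr (τ₁ τ₂ : ℕ → ℕ → ℝ) (M : ℕ)
    (h : ∀ i ≤ M, ∀ j, τ₁ i (j + 1) = τ₂ i (j + 1)) :
    ∀ m ≤ M, ∀ n, depart τ₁ m n = depart τ₂ m n := by
  intro m
  induction m with
  | zero =>
    intro _ n
    rw [depart_row_zero, depart_row_zero]
    exact Finset.sum_congr rfl fun k _ => h 0 (Nat.zero_le M) k
  | succ m ihm =>
    intro hm n
    induction n with
    | zero => rw [depart_zero, depart_zero]
    | succ n ihn =>
      rw [depart, depart, ihm (le_trans (Nat.le_succ m) hm) (n + 1), ihn,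
        h (m + 1) hm n]

lemma depart_nonneg (τ : ℕ → ℕ → ℝ) (hτ : ∀ i n, 0 ≤ τ i n) (m : ℕ) :
    ∀ n, 0 ≤ depart τ m n := by
  induction m with
  | zero =>
    intro n
    rw [depart_row_zero]
    exact Finset.sum_nonneg fun k _ => hτ _ _
  | succ m ihm =>
    intro n
    induction n with
    | zero => simp [depart_zero]
    | succ n ihn =>
      rw [depart]
      exact add_nonneg (le_trans ihn (le_max_right _ _)) (hτ _ _)

lemma sum_le_depart (τ : ℕ → ℕ → ℝ) (m : ℕ) :
    ∀ n, ∑ k ∈ range n, τ m (k + 1) ≤ depart τ m n := by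
  intro n
  induction n with
  | zero => simp [depart_zero]
  | succ n ih =>
    cases m with
    | zero => exact le_of_eq (depart_row_zero τ (n + 1)).symm
    | succ m =>
      rw [depart, Finset.sum_range_succ]
      exact add_le_add (le_trans ih (le_max_right _ _)) le_rfl

lemma depart_le_succ (τ : ℕ → ℕ → ℝ) (hτ : ∀ i n, 0 ≤ τ i n) (m n : ℕ) :
    depart τ m n ≤ depart τ (m + 1) n := by
  cases n with
  | zero => rw [depart_zero, depart_zero]
  | succ n =>
    conv_rhs => rw [depart]
    exact le_trans (le_max_left _ _) (le_add_of_nonneg_right (hτ _ _))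

lemma depart_succ_le (τ : ℕ → ℕ → ℝ) (hτ : ∀ i n, 0 ≤ τ i n) (m : ℕ) :
    ∀ n, ∃ k ≤ n, depart τ (m + 1) (n + 1) ≤
      depart τ m (k + 1) +
        (∑ j ∈ range (n + 1), τ (m + 1) (j + 1) - ∑ j ∈ range k, τ (m + 1) (j + 1)) := by
  intro n
  induction n with
  | zero =>
    refine ⟨0, le_rfl, ?_⟩
    rw [depart, depart_zero, max_eq_left (depart_nonneg τ hτ m 1)]
    simp
  | succ n ih =>
    obtain ⟨k, hk, hle⟩ := ih
    rw [depart]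
    have hsum : ∑ j ∈ range (n + 1 + 1), τ (m + 1) (j + 1)
        = ∑ j ∈ range (n + 1), τ (m + 1) (j + 1) + τ (m + 1) (n + 1 + 1) :=
      Finset.sum_range_succ _ _
    rcases max_cases (depart τ m (n + 1 + 1)) (depart τ (m + 1) (n + 1)) with
      ⟨heq, _⟩ | ⟨heq, _⟩
    · refine ⟨n + 1, le_rfl, ?_⟩
      rw [heq]
      rw [hsum]
      ring_nf
      linarith
    · refine ⟨k, hk.trans (Nat.le_succ n), ?_⟩
      rw [heq]
      linarith
lemma exists_linear_bound (g : ℕ → ℝ) (a : ℝ)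
    (h : ∀ᶠ n : ℕ in atTop, g n ≤ a * n) :
    ∃ C, 0 ≤ C ∧ ∀ n : ℕ, g n ≤ a * n + C := by
  obtain ⟨N, hN⟩ := eventually_atTop.mp h
  refine ⟨∑ k ∈ range N, |g k - a * k|,
    Finset.sum_nonneg fun k _ => abs_nonneg _, fun n => ?_⟩
  rcases le_or_gt N n with hn | hn
  · have h1 := hN n hn
    have h2 : (0:ℝ) ≤ ∑ k ∈ range N, |g k - a * k| :=
      Finset.sum_nonneg fun k _ => abs_nonneg _
    linarith
  · have h1 : |g n - a * n| ≤ ∑ k ∈ range N, |g k - a * k| :=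
      Finset.single_le_sum (f := fun k => |g k - a * k|)
        (fun k _ => abs_nonneg _) (Finset.mem_range.mpr hn)
    have h2 := le_abs_self (g n - a * n)
    linarith

lemma sup'_range_succ_eq (l : ℕ → ℝ) (M : ℕ) :
    (range (M + 1 + 1)).sup'
        (Finset.nonempty_range_iff.mpr (Nat.succ_ne_zero (M + 1))) l
      = max ((range (M + 1)).sup'
          (Finset.nonempty_range_iff.mpr (Nat.succ_ne_zero M)) l) (l (M + 1)) := by
  apply le_antisymm
  · apply Finset.sup'_le
    intro i hi
    have hi' := Finset.mem_range.mp hi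
    rcases (by omega : i < M + 1 ∨ i = M + 1) with h | h
    · exact le_max_of_le_left (Finset.le_sup' l (Finset.mem_range.mpr h))
    · subst h; exact le_max_right _ _
  · apply max_le
    · apply Finset.sup'_le
      intro i hi
      have hi' := Finset.mem_range.mp hi
      exact Finset.le_sup' l (Finset.mem_range.mpr (by omega))
    · exact Finset.le_sup' l (Finset.mem_range.mpr (by omega))

lemma det_tendsto (M : ℕ) (τ : ℕ → ℕ → ℝ) (l : ℕ → ℝ) (hτ : ∀ i n, 0 ≤ τ i n)
    (hS : ∀ i ≤ M, Tendsto (fun n : ℕ => (∑ k ∈ range n, τ i (k + 1)) / n)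
      atTop (nhds (l i))) :
    Tendsto (fun n : ℕ => depart τ M n / n) atTop
      (nhds ((range (M + 1)).sup'
        (Finset.nonempty_range_iff.mpr (Nat.succ_ne_zero M)) l)) := by
  induction M with
  | zero =>
    have hsup : (range (0 + 1)).sup'
        (Finset.nonempty_range_iff.mpr (Nat.succ_ne_zero 0)) l = l 0 := by
      apply le_antisymm
      · apply Finset.sup'_le
        intro i hi
        have : i = 0 := by have := Finset.mem_range.mp hi; omega
        subst this; exact le_rfl
      · exact Finset.le_sup' l (Finset.mem_range.mpr (by omega))
    rw [hsup]
    refine (hS 0 le_rfl).congr fun n => ?_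
    rw [depart_row_zero]
  | succ M ih =>
    rw [sup'_range_succ_eq]
    have ihM := ih (fun i hi => hS i (hi.trans (Nat.le_succ M)))
    have hlam := hS (M + 1) le_rfl
    set L := (range (M + 1)).sup'
      (Finset.nonempty_range_iff.mpr (Nat.succ_ne_zero M)) l with hLdef
    set lam := l (M + 1) with hlamdef
    -- nonnegativity of limits
    have hlam0 : 0 ≤ lam := by
      refine ge_of_tendsto hlam ?_
      filter_upwards with n
      exact div_nonneg (Finset.sum_nonneg fun k _ => hτ _ _) (Nat.cast_nonneg n)
    have hL'0 : 0 ≤ max L lam := le_trans hlam0 (le_max_right _ _)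
    -- lower bound sequence
    have hA : Tendsto (fun n : ℕ =>
        max (depart τ M n / n) ((∑ k ∈ range n, τ (M + 1) (k + 1)) / n))
        atTop (nhds (max L lam)) := ihM.max hlam
    have hAle : ∀ n : ℕ,
        max (depart τ M n / n) ((∑ k ∈ range n, τ (M + 1) (k + 1)) / n)
          ≤ depart τ (M + 1) n / n := by
      intro n
      cases n with
      | zero => simp [depart_zero]
      | succ n =>
        have hn : (0:ℝ) < ((n + 1 : ℕ) : ℝ) := by exact_mod_cast Nat.succ_pos n
        apply max_le
        · exact (div_le_div_iff_of_pos_right hn).mpr (depart_le_succ τ hτ M (n + 1))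
        · exact (div_le_div_iff_of_pos_right hn).mpr (sum_le_depart τ (M + 1) (n + 1))
    rw [Metric.tendsto_atTop]
    intro ε hε
    have hδ : 0 < ε / 6 := by positivity
    -- linear upper bounds with constants
    have ev1 : ∀ᶠ n : ℕ in atTop, depart τ M n ≤ (L + ε / 6) * n := by
      filter_upwards [ihM.eventually_lt_const (by linarith : L < L + ε / 6),
        eventually_ge_atTop 1] with n h1 h2
      have hn : (0:ℝ) < n := by exact_mod_cast h2
      have := (div_lt_iff₀ hn).mp h1
      linarith
    have ev2 : ∀ᶠ n : ℕ in atTop,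
        (∑ j ∈ range n, τ (M + 1) (j + 1)) ≤ (lam + ε / 6) * n := by
      filter_upwards [hlam.eventually_lt_const (by linarith : lam < lam + ε / 6),
        eventually_ge_atTop 1] with n h1 h2
      have hn : (0:ℝ) < n := by exact_mod_cast h2
      have := (div_lt_iff₀ hn).mp h1
      linarith
    have ev3 : ∀ᶠ n : ℕ in atTop,
        (-∑ j ∈ range n, τ (M + 1) (j + 1)) ≤ (ε / 6 - lam) * n := by
      filter_upwards [hlam.eventually_const_lt (by linarith : lam - ε / 6 < lam),
        eventually_ge_atTop 1] with n h1 h2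
      have hn : (0:ℝ) < n := by exact_mod_cast h2
      have := (lt_div_iff₀ hn).mp h1
      nlinarith
    obtain ⟨C₁, hC₁0, hC₁⟩ := exists_linear_bound (fun k => depart τ M k) (L + ε / 6) ev1
    obtain ⟨C₂, hC₂0, hC₂⟩ := exists_linear_bound
      (fun k => ∑ j ∈ range k, τ (M + 1) (j + 1)) (lam + ε / 6) ev2
    obtain ⟨C₃, hC₃0, hC₃⟩ := exists_linear_bound
      (fun k => -∑ j ∈ range k, τ (M + 1) (j + 1)) (ε / 6 - lam) ev3
    -- the key upper bound
    have key : ∀ n : ℕ, 1 ≤ n → depart τ (M + 1) n ≤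
        (max L lam + ε / 6) * ((n : ℝ) + 1) + 2 * (ε / 6) * n + (C₁ + C₂ + C₃) := by
      intro n hn
      obtain ⟨n', rfl⟩ : ∃ n', n = n' + 1 := ⟨n - 1, by omega⟩
      obtain ⟨k, hk, hle⟩ := depart_succ_le τ hτ M n'
      have b1 := hC₁ (k + 1)
      have b2 := hC₂ (n' + 1)
      have b3 := hC₃ k
      have hkn : (k : ℝ) ≤ (n' : ℝ) := by exact_mod_cast hk
      have hLle : L ≤ max L lam := le_max_left _ _
      have hlamle : lam ≤ max L lam := le_max_right _ _
      have hk0 : (0:ℝ) ≤ (k : ℝ) := Nat.cast_nonneg k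
      have p1 : 0 ≤ (max L lam - L) * ((k : ℝ) + 1) :=
        mul_nonneg (by linarith) (by linarith)
      have p2 : 0 ≤ (max L lam - lam) * ((n' : ℝ) + 1 - k) :=
        mul_nonneg (by linarith) (by linarith)
      have p3 : 0 ≤ (ε / 6) * ((n' : ℝ) + 1 - k) :=
        mul_nonneg (le_of_lt hδ) (by linarith)
      push_cast at b1 b2 b3 ⊢
      nlinarith [hle, b1, b2, b3, p1, p2, p3]
    -- upper eventual bound
    have hub : ∀ᶠ n : ℕ in atTop,
        depart τ (M + 1) n / n ≤ max L lam + 4 * (ε / 6) := by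
      have t1 : Tendsto (fun n : ℕ =>
          (max L lam + ε / 6 + (C₁ + C₂ + C₃)) / n) atTop (nhds 0) :=
        tendsto_const_div_atTop_nhds_zero_nat _
      filter_upwards [t1.eventually_lt_const hδ, eventually_ge_atTop 1]
        with n h1 h2
      have hn : (0:ℝ) < n := by exact_mod_cast h2
      have hkey := key n h2
      have expand : ((max L lam + ε / 6) * ((n : ℝ) + 1) + 2 * (ε / 6) * n
            + (C₁ + C₂ + C₃)) / n
          = max L lam + 3 * (ε / 6)
            + (max L lam + ε / 6 + (C₁ + C₂ + C₃)) / n := by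
        field_simp
        ring
      calc depart τ (M + 1) n / n
          ≤ ((max L lam + ε / 6) * ((n : ℝ) + 1) + 2 * (ε / 6) * n
              + (C₁ + C₂ + C₃)) / n := (div_le_div_iff_of_pos_right hn).mpr hkey
        _ = max L lam + 3 * (ε / 6)
              + (max L lam + ε / 6 + (C₁ + C₂ + C₃)) / n := expand
        _ ≤ max L lam + 4 * (ε / 6) := by linarith
    -- lower eventual bound
    have hlb : ∀ᶠ n : ℕ in atTop,
        max L lam - ε / 6 < depart τ (M + 1) n / n := by
      filter_upwards [hA.eventually_const_lt
        (by linarith : max L lam - ε / 6 < max L lam)] with n h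
      exact lt_of_lt_of_le h (hAle n)
    obtain ⟨N, hN⟩ := eventually_atTop.mp (hub.and hlb)
    refine ⟨N, fun n hn => ?_⟩
    obtain ⟨h1, h2⟩ := hN n hn
    rw [Real.dist_eq, abs_sub_lt_iff]
    constructor <;> linarith

/-- **Throughput of the tandem system.** If the interarrival and service times
`τ i n` form mutually independent sequences of i.i.d. nonnegative random
variables with finite means and finite variances, and at least one of the
means `E[τ i 1]`, `0 ≤ i ≤ M`, is positive, then with probability one
`n / D_M(n) → (max_{0 ≤ i ≤ M} E[τ i 1])⁻¹`. -/
theorem throughput_eq_inv_max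
    {Ω : Type*} [MeasurableSpace Ω] (μ : Measure Ω) [IsProbabilityMeasure μ]
    (M : ℕ) (τ : ℕ → ℕ → Ω → ℝ)
    (hpos : ∀ i ≤ M, ∀ n, 1 ≤ n → ∀ ω, 0 ≤ τ i n ω)
    (hmeas : ∀ i ≤ M, ∀ n, Measurable (τ i n))
    (hindep : iIndepFun
        (fun p : Fin (M + 1) × ℕ => τ (p.1 : ℕ) (p.2 + 1)) μ)
    (hident : ∀ i ≤ M, ∀ n, 1 ≤ n → IdentDistrib (τ i n) (τ i 1) μ μ)
    (hint : ∀ i ≤ M, Integrable (τ i 1) μ)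
    (hvar : ∀ i ≤ M, MemLp (τ i 1) 2 μ)
    (hposmean : ∃ i ≤ M, 0 < ∫ ω, τ i 1 ω ∂μ) :
    ∀ᵐ ω ∂μ, Tendsto (fun n : ℕ => (n : ℝ) / depart (fun i j => τ i j ω) M n)
      atTop
      (nhds ((Finset.range (M + 1)).sup'
          (Finset.nonempty_range_iff.mpr (Nat.succ_ne_zero M))
          fun i => ∫ ω, τ i 1 ω ∂μ)⁻¹) := by
  classical
  set l : ℕ → ℝ := fun i => ∫ ω, τ i 1 ω ∂μ with hl
  have slln : ∀ i : ℕ, ∀ᵐ ω ∂μ, i ≤ M →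
      Tendsto (fun n : ℕ => (∑ k ∈ range n, τ i (k + 1) ω) / n)
        atTop (nhds (l i)) := by
    intro i
    by_cases hi : i ≤ M
    · have hi' : i < M + 1 := Nat.lt_succ_of_le hi
      have hindep' : Pairwise (Function.onFun (fun f g => IndepFun f g μ)
          (fun n : ℕ => τ i (n + 1))) := by
        intro j k hjk
        exact hindep.indepFun
          (i := (⟨i, hi'⟩, j)) (j := (⟨i, hi'⟩, k))
          (fun h => hjk (congrArg Prod.snd h))
      have hident' : ∀ n : ℕ, IdentDistrib (τ i (n + 1)) (τ i (0 + 1)) μ μ :=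
        fun n => hident i hi (n + 1) (Nat.succ_le_succ (Nat.zero_le n))
      have := strong_law_ae_real (μ := μ) (fun n => τ i (n + 1))
        (hint i hi) hindep' hident'
      filter_upwards [this] with ω hω _
      exact hω
    · filter_upwards with ω h
      exact absurd h hi
  have hae : ∀ᵐ ω ∂μ, ∀ i : ℕ, i ≤ M →
      Tendsto (fun n : ℕ => (∑ k ∈ range n, τ i (k + 1) ω) / n)
        atTop (nhds (l i)) := ae_all_iff.mpr slln
  filter_upwards [hae] with ω hω
  set g : ℕ → ℕ → ℝ := fun i j => if i ≤ M ∧ 1 ≤ j then τ i j ω else 0 with hg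
  have hgnn : ∀ i n, 0 ≤ g i n := by
    intro i n
    simp only [hg]
    split
    · next h => exact hpos i h.1 n h.2 ω
    · exact le_rfl
  have hgS : ∀ i ≤ M, Tendsto (fun n : ℕ => (∑ k ∈ range n, g i (k + 1)) / n)
      atTop (nhds (l i)) := by
    intro i hi
    refine (hω i hi).congr fun n => ?_
    congr 1
    exact Finset.sum_congr rfl fun k _ => by simp [hg, hi]
  have hdet := det_tendsto M g l hgnn hgS
  have hde : ∀ n, depart g M n = depart (fun i j => τ i j ω) M n :=
    depart_congr g (fun i j => τ i j ω) M
      (fun i hi j => by simp [hg, hi]) M le_rfl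
  have hdet' : Tendsto (fun n : ℕ => depart (fun i j => τ i j ω) M n / n)
      atTop (nhds ((range (M + 1)).sup'
        (Finset.nonempty_range_iff.mpr (Nat.succ_ne_zero M)) l)) :=
    hdet.congr fun n => by rw [hde]
  obtain ⟨i0, hi0, hp0⟩ := hposmean
  have hLpos : 0 < (range (M + 1)).sup'
      (Finset.nonempty_range_iff.mpr (Nat.succ_ne_zero M)) l :=
    lt_of_lt_of_le hp0 (Finset.le_sup' l (Finset.mem_range.mpr (by omega)))
  have hinv := hdet'.inv₀ (ne_of_gt hLpos)
  exact hinv.congr fun n => inv_div _ _
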